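/- For λ > 0 and r > 0, ∫_r^∞ ∫_r^{r₂} (2r/(r₁+r₂))·8λ²·exp(-2λ(r₁+r₂)) dr₁ dr₂ = 4λr·exp(-4λr) - 16λ²r²·E₁(4λr), where E₁ is the exponential integral. -/

import Mathlib

open Real MeasureTheory

noncomputable def E1 (z : ℝ) : ℝ := ∫ t in Set.Ioi z, Real.exp (-t) / t

open Set Filter in
lemma f0_integrableOn {a : ℝ} (ha : 0 < a) :
    IntegrableOn (fun t => Real.exp (-t) / t) (Ioi a) := by
  have h1 : IntegrableOn (fun t => Real.exp (-1 * t) * a⁻¹) (Ioi a) :=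
    (exp_neg_integrableOn_Ioi a one_pos).mul_const _
  refine h1.mono' ?_ ?_
  · refine (ContinuousOn.aestronglyMeasurable ?_ measurableSet_Ioi)
    exact (Real.continuous_exp.comp continuous_neg).continuousOn.div
      continuousOn_id (fun t ht => (ha.trans ht).ne')
  · filter_upwards [ae_restrict_mem measurableSet_Ioi] with t ht
    have h0 : 0 < t := ha.trans ht
    rw [Real.norm_eq_abs, abs_of_nonneg (div_nonneg (Real.exp_pos _).le h0.le)]
    rw [neg_one_mul, div_eq_mul_inv]
    exact mul_le_mul_of_nonneg_left (by
      exact inv_anti₀ ha ht.le) (Real.exp_pos _).le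

open Set Filter in
lemma E1_split {a b : ℝ} (ha : 0 < a) (hab : a ≤ b) :
    E1 a = (∫ t in a..b, Real.exp (-t) / t) + E1 b := by
  have hb : 0 < b := ha.trans_le hab
  rw [intervalIntegral.integral_of_le hab, E1, E1]
  rw [← MeasureTheory.setIntegral_union (Ioc_disjoint_Ioi le_rfl)
    measurableSet_Ioi ((f0_integrableOn ha).mono_set Ioc_subset_Ioi_self)
    (f0_integrableOn hb), Ioc_union_Ioi_eq_Ioi hab]

open Set Filter in
lemma E1_hasDerivAt {z : ℝ} (hz : 0 < z) :
    HasDerivAt E1 (-(Real.exp (-z) / z)) z := by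
  set a := z / 2 with ha_def
  have ha : 0 < a := by positivity
  have haz : a < z := by rw [ha_def]; linarith
  have hint : IntervalIntegrable (fun t => Real.exp (-t) / t) volume a z := by
    rw [intervalIntegrable_iff_integrableOn_Ioc_of_le haz.le]
    exact (f0_integrableOn ha).mono_set Ioc_subset_Ioi_self
  have hmeas : StronglyMeasurableAtFilter (fun t => Real.exp (-t) / t) (nhds z) volume := by
    refine ⟨Ioi a, Ioi_mem_nhds haz, ?_⟩
    exact ContinuousOn.aestronglyMeasurable
      ((Real.continuous_exp.comp continuous_neg).continuousOn.div
        continuousOn_id (fun t ht => (ha.trans ht).ne')) measurableSet_Ioi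
  have hcont : ContinuousAt (fun t => Real.exp (-t) / t) z :=
    ((Real.continuous_exp.comp continuous_neg).continuousAt).div continuousAt_id hz.ne'
  have hD := intervalIntegral.integral_hasDerivAt_right hint hmeas hcont
  have heq : ∀ᶠ x in nhds z, E1 a - (∫ t in a..x, Real.exp (-t) / t) = E1 x := by
    filter_upwards [Ioi_mem_nhds haz] with x hx
    rw [E1_split ha (le_of_lt hx)]; ring
  have : HasDerivAt (fun x => E1 a - ∫ t in a..x, Real.exp (-t) / t)
      (-(Real.exp (-z) / z)) z := ((hasDerivAt_const z (E1 a)).sub hD).congr_deriv (by ring)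
  exact this.congr_of_eventuallyEq (heq.mono fun x h => h.symm)

open Set in
lemma E1_nonneg {z : ℝ} (hz : 0 < z) : 0 ≤ E1 z :=
  setIntegral_nonneg measurableSet_Ioi fun t ht =>
    div_nonneg (Real.exp_pos _).le (hz.trans ht).le

open Set in
lemma E1_le {z : ℝ} (hz : 0 < z) : E1 z ≤ Real.exp (-z) / z := by
  have h1 : E1 z ≤ ∫ t in Ioi z, Real.exp (-t) / z := by
    refine setIntegral_mono_on (f0_integrableOn hz)
      ((exp_neg_integrableOn_Ioi z one_pos).congr_fun (fun x _ => by simp [neg_one_mul])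
        measurableSet_Ioi |>.div_const z) measurableSet_Ioi fun t ht => ?_
    exact div_le_div_of_nonneg_left (Real.exp_pos _).le hz (le_of_lt ht)
  calc E1 z ≤ ∫ t in Ioi z, Real.exp (-t) / z := h1
    _ = (∫ t in Ioi z, Real.exp (-t)) / z := by rw [integral_div]
    _ = Real.exp (-z) / z := by rw [integral_exp_neg_Ioi]

open Set Filter in
lemma aux_deriv (a b x : ℝ) (ha : 0 < a) (hx : 0 < b + x) :
    HasDerivAt (fun y => (b + y) * E1 (a * (b + y)) - Real.exp (-(a * (b + y))) / a)
      (E1 (a * (b + x))) x := by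
  have hu : 0 < a * (b + x) := by positivity
  have h1 : HasDerivAt (fun y => b + y) 1 x := (hasDerivAt_id x).const_add b
  have h2 : HasDerivAt (fun y => a * (b + y)) a x := by simpa using h1.const_mul a
  have hE : HasDerivAt (fun y => E1 (a * (b + y)))
      (-(Real.exp (-(a * (b + x))) / (a * (b + x))) * a) x := by
    have := (E1_hasDerivAt hu).comp x h2; exact this
  have hexp : HasDerivAt (fun y => Real.exp (-(a * (b + y))))
      (Real.exp (-(a * (b + x))) * (-a)) x := h2.neg.exp
  have := (h1.mul hE).sub (hexp.div_const a)
  refine this.congr_deriv ?_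
  field_simp
  ring

open Set Filter in
lemma exp_term (a b : ℝ) (ha : 0 < a) :
    Filter.Tendsto (fun y => Real.exp (-(a * (b + y)))) atTop (nhds 0) :=
  Real.tendsto_exp_neg_atTop_nhds_zero.comp
    ((tendsto_atTop_add_const_left atTop b tendsto_id).const_mul_atTop ha)

open Set Filter in
lemma tendsto_mul_E1 (a b : ℝ) (ha : 0 < a) :
    Filter.Tendsto (fun y => (b + y) * E1 (a * (b + y))) atTop (nhds 0) := by
  have hg : Filter.Tendsto (fun y => Real.exp (-(a * (b + y))) / a) atTop (nhds 0) := by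
    simpa using (exp_term a b ha).div_const a
  refine squeeze_zero' ?_ ?_ hg
  · filter_upwards [eventually_gt_atTop (-b)] with y hy
    have hby : 0 < b + y := by linarith
    exact mul_nonneg hby.le (E1_nonneg (by positivity))
  · filter_upwards [eventually_gt_atTop (-b)] with y hy
    have hby : 0 < b + y := by linarith
    have hu : 0 < a * (b + y) := by positivity
    calc (b + y) * E1 (a * (b + y))
        ≤ (b + y) * (Real.exp (-(a * (b + y))) / (a * (b + y))) :=
          mul_le_mul_of_nonneg_left (E1_le hu) hby.le
      _ = Real.exp (-(a * (b + y))) / a := by field_simp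

theorem stmt7 (lam r : ℝ) (hlam : 0 < lam) (hr : 0 < r) :
    (∫ r2 in Set.Ioi r, ∫ r1 in r..r2,
        (2 * r / (r1 + r2)) * (8 * lam ^ 2 * Real.exp (-2 * lam * (r1 + r2))))
      = 4 * lam * r * Real.exp (-4 * lam * r)
        - 16 * lam ^ 2 * r ^ 2 * E1 (4 * lam * r) := by
  -- the value of the inner integral
  set f' : ℝ → ℝ := fun x => 16 * lam ^ 2 * r * (E1 (2 * lam * (r + x)) - E1 (4 * lam * x))
    with hf'
  have hinner : ∀ r2 ∈ Set.Ioi r, (∫ r1 in r..r2,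
      (2 * r / (r1 + r2)) * (8 * lam ^ 2 * Real.exp (-2 * lam * (r1 + r2)))) = f' r2 := by
    intro r2 hr2
    rw [Set.mem_Ioi] at hr2
    have hr2' : 0 < r2 := hr.trans hr2
    have hD : ∀ y ∈ Set.uIcc r r2, HasDerivAt (fun y => -(16 * lam ^ 2 * r) * E1 (2 * lam * (y + r2)))
        ((2 * r / (y + r2)) * (8 * lam ^ 2 * Real.exp (-2 * lam * (y + r2)))) y := by
      intro y hy
      rw [Set.uIcc_of_le hr2.le] at hy
      have hy0 : 0 < y := hr.trans_le hy.1
      have hu : 0 < 2 * lam * (y + r2) := by positivity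
      have h2 : HasDerivAt (fun y => 2 * lam * (y + r2)) (2 * lam) y := by
        simpa using ((hasDerivAt_id y).add_const r2).const_mul (2 * lam)
      have hE := (E1_hasDerivAt hu).comp y h2
      refine (hE.const_mul (-(16 * lam ^ 2 * r))).congr_deriv ?_
      have : -2 * lam * (y + r2) = -(2 * lam * (y + r2)) := by ring
      rw [this]
      field_simp
      ring
    have hci : ContinuousOn (fun r1 => (2 * r / (r1 + r2)) *
        (8 * lam ^ 2 * Real.exp (-2 * lam * (r1 + r2)))) (Set.uIcc r r2) := by
      apply ContinuousOn.mul
      · refine continuousOn_const.div (continuousOn_id.add continuousOn_const) ?_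
        intro y hy
        rw [Set.uIcc_of_le hr2.le] at hy
        have h1 := hy.1
        exact ne_of_gt (by linarith)
      · exact (continuous_const.mul ((continuous_const.mul
          (continuous_id.add continuous_const)).rexp)).continuousOn
    have := intervalIntegral.integral_eq_sub_of_hasDerivAt hD (hci.intervalIntegrable)
    rw [this, hf']
    have h44 : 2 * lam * (r2 + r2) = 4 * lam * r2 := by ring
    rw [h44]
    ring
  rw [MeasureTheory.setIntegral_congr_fun measurableSet_Ioi hinner]
  -- the antiderivative
  set F : ℝ → ℝ := fun y => 16 * lam ^ 2 * r *
      (((r + y) * E1 (2 * lam * (r + y)) - Real.exp (-(2 * lam * (r + y))) / (2 * lam))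
        - (y * E1 (4 * lam * y) - Real.exp (-(4 * lam * y)) / (4 * lam))) with hF
  have hG2 : ∀ x : ℝ, 0 < x → HasDerivAt (fun y => y * E1 (4 * lam * y)
      - Real.exp (-(4 * lam * y)) / (4 * lam)) (E1 (4 * lam * x)) x := by
    intro x hx
    have := aux_deriv (4 * lam) 0 x (by positivity) (by simpa using hx)
    simpa using this
  have hFderiv : ∀ x : ℝ, 0 < x → HasDerivAt F (f' x) x := by
    intro x hx
    have h1 := aux_deriv (2 * lam) r x (by positivity) (by positivity)
    exact ((h1.sub (hG2 x hx)).const_mul (16 * lam ^ 2 * r))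
  have hFtends : Filter.Tendsto F Filter.atTop (nhds 0) := by
    have h1 := tendsto_mul_E1 (2 * lam) r (by positivity)
    have h2 := exp_term (2 * lam) r (by positivity)
    have h3 : Filter.Tendsto (fun y => y * E1 (4 * lam * y)) Filter.atTop (nhds 0) := by
      have := tendsto_mul_E1 (4 * lam) 0 (by positivity)
      simpa using this
    have h4 : Filter.Tendsto (fun y => Real.exp (-(4 * lam * y))) Filter.atTop (nhds 0) := by
      have := exp_term (4 * lam) 0 (by positivity)
      simpa using this
    have := (((h1.sub (h2.div_const (2 * lam))).sub
      (h3.sub (h4.div_const (4 * lam)))).const_mul (16 * lam ^ 2 * r))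
    simpa using this
  have hf'int : IntegrableOn f' (Set.Ioi r) := by
    have hg : IntegrableOn (fun x => (4 * lam * Real.exp (-(2 * lam * r))) *
        Real.exp (-(2 * lam) * x)) (Set.Ioi r) :=
      (exp_neg_integrableOn_Ioi r (by positivity)).const_mul _
    refine hg.mono' ?_ ?_
    · refine ContinuousOn.aestronglyMeasurable ?_ measurableSet_Ioi
      intro x hx
      rw [Set.mem_Ioi] at hx
      have hx0 : 0 < x := hr.trans hx
      have c1 : ContinuousAt (fun y => E1 (2 * lam * (r + y))) x := by
        refine ContinuousAt.comp (E1_hasDerivAt (by positivity)).continuousAt ?_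
        fun_prop
      have c2 : ContinuousAt (fun y => E1 (4 * lam * y)) x := by
        refine ContinuousAt.comp (E1_hasDerivAt (by positivity)).continuousAt ?_
        fun_prop
      exact (continuousAt_const.mul (c1.sub c2)).continuousWithinAt
    · filter_upwards [ae_restrict_mem measurableSet_Ioi] with x hx
      rw [Set.mem_Ioi] at hx
      have hx0 : 0 < x := hr.trans hx
      have hu1 : 0 < 2 * lam * (r + x) := by positivity
      have hu2 : 0 < 4 * lam * x := by positivity
      have hle1 : 4 * lam * r ≤ 2 * lam * (r + x) := by nlinarith
      have hle2 : 2 * lam * (r + x) ≤ 4 * lam * x := by nlinarith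
      have hM : ∀ u : ℝ, 2 * lam * (r + x) ≤ u → 4 * lam * r ≤ u →
          E1 u ≤ Real.exp (-(2 * lam * (r + x))) / (4 * lam * r) := by
        intro u hu hu'
        have hu0 : 0 < u := lt_of_lt_of_le (by positivity) hu'
        refine (E1_le hu0).trans ?_
        gcongr
      have b1 := hM _ le_rfl hle1
      have b2 := hM _ hle2 (hle1.trans hle2)
      have habs : |E1 (2 * lam * (r + x)) - E1 (4 * lam * x)| ≤
          Real.exp (-(2 * lam * (r + x))) / (4 * lam * r) := by
        rw [abs_sub_le_iff]
        constructor
        · have := E1_nonneg hu2; linarith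
        · have := E1_nonneg hu1; linarith
      rw [hf']
      rw [Real.norm_eq_abs, abs_mul, abs_of_nonneg (by positivity : (0:ℝ) ≤ 16 * lam ^ 2 * r)]
      calc 16 * lam ^ 2 * r * |E1 (2 * lam * (r + x)) - E1 (4 * lam * x)|
          ≤ 16 * lam ^ 2 * r * (Real.exp (-(2 * lam * (r + x))) / (4 * lam * r)) := by
            gcongr
        _ = 4 * lam * Real.exp (-(2 * lam * r)) * Real.exp (-(2 * lam) * x) := by
            rw [show -(2 * lam * (r + x)) = -(2 * lam * r) + -(2 * lam) * x by ring,
              Real.exp_add]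
            field_simp
            ring
  have hcont : ContinuousWithinAt F (Set.Ici r) r := (hFderiv r hr).continuousAt.continuousWithinAt
  have key := MeasureTheory.integral_Ioi_of_hasDerivAt_of_tendsto hcont
    (fun x hx => hFderiv x (hr.trans hx)) hf'int hFtends
  rw [key, hF]
  simp only []
  have h1 : 2 * lam * (r + r) = 4 * lam * r := by ring
  have h2 : -(4 * lam * r) = -4 * lam * r := by ring
  rw [h1, h2]
  field_simp
  ring
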